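/- Let k be an algebraically closed field with char k ≠ 2, and let d, D, d', D' ∈ k with d ≠ 1, D ≠ 1, d' ≠ 1, D' ≠ 1. Then there is a graded isomorphism S(d,D) ≅ S(d',D') if and only if (d',D') = (d,D) or (d',D') = (D,d). -/

import Mathlib

noncomputable section

/-- The free algebra on three generators `x, y, z` (indexed by `Fin 3`). -/
abbrev F3 (k : Type) [Field k] : Type := FreeAlgebra k (Fin 3)

noncomputable def X (k : Type) [Field k] : F3 k := FreeAlgebra.ι k 0
noncomputable def Y (k : Type) [Field k] : F3 k := FreeAlgebra.ι k 1
noncomputable def Z (k : Type) [Field k] : F3 k := FreeAlgebra.ι k 2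

/-- The quotient of the free algebra on `x, y, z` by the two-sided ideal
generated by the set `rels`. -/
abbrev quotAlg (k : Type) [Field k] (rels : Set (F3 k)) : Type :=
  RingQuot (fun a b : F3 k => a ∈ rels ∧ b = 0)

/-- The image of the `i`-th generator in the quotient algebra. -/
noncomputable def gen (k : Type) [Field k] (rels : Set (F3 k)) (i : Fin 3) :
    quotAlg k rels :=
  RingQuot.mkAlgHom k (fun a b : F3 k => a ∈ rels ∧ b = 0) (FreeAlgebra.ι k i)

/-- The `k`-linear span of the images of the generators in the quotient. -/
noncomputable def genSpan (k : Type) [Field k] (rels : Set (F3 k)) :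
    Submodule k (quotAlg k rels) :=
  Submodule.span k (Set.range (gen k rels))

/-- There is a graded isomorphism between the two quotient algebras:
a `k`-algebra isomorphism carrying the span of the generators onto the
span of the generators. -/
def GradedIso (k : Type) [Field k] (r1 r2 : Set (F3 k)) : Prop :=
  ∃ φ : quotAlg k r1 ≃ₐ[k] quotAlg k r2,
    Submodule.map φ.toLinearMap (genSpan k r1) = genSpan k r2

/-- Relations of `S(d,D) = k⟨x,y,z⟩/⟨xy − yx, zx − d·xz, zy − D·yz⟩`. -/
noncomputable def SdDrel (k : Type) [Field k] (d D : k) : Set (F3 k) :=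
  {X k * Y k - Y k * X k, Z k * X k - d • (X k * Z k), Z k * Y k - D • (Y k * Z k)}


namespace Stmt7Aux

variable (k : Type) [Field k]

abbrev M : Type := (ℕ × ℕ × ℕ) →₀ k

def shiftX : M k →ₗ[k] M k := Finsupp.lmapDomain k k (fun p => (p.1+1, p.2.1, p.2.2))
def shiftY : M k →ₗ[k] M k := Finsupp.lmapDomain k k (fun p => (p.1, p.2.1+1, p.2.2))
def actZ (d D : k) : M k →ₗ[k] M k :=
  Finsupp.lsum k (fun p => LinearMap.toSpanSingleton k (M k)
    (Finsupp.single (p.1, p.2.1, p.2.2+1) (d^p.1 * D^p.2.1)))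

@[simp] lemma shiftX_single (p : ℕ × ℕ × ℕ) (c : k) :
    shiftX k (Finsupp.single p c) = Finsupp.single (p.1+1, p.2.1, p.2.2) c := by
  simp [shiftX, Finsupp.mapDomain_single]

@[simp] lemma shiftY_single (p : ℕ × ℕ × ℕ) (c : k) :
    shiftY k (Finsupp.single p c) = Finsupp.single (p.1, p.2.1+1, p.2.2) c := by
  simp [shiftY, Finsupp.mapDomain_single]

@[simp] lemma actZ_single (d D : k) (p : ℕ × ℕ × ℕ) (c : k) :
    actZ k d D (Finsupp.single p c)
      = Finsupp.single (p.1, p.2.1, p.2.2+1) (c * (d^p.1 * D^p.2.1)) := by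
  simp only [actZ, Finsupp.lsum_single, LinearMap.toSpanSingleton_apply, Finsupp.smul_single,
    smul_eq_mul]

def ops (d D : k) : Fin 3 → (M k →ₗ[k] M k) := ![shiftX k, shiftY k, actZ k d D]

lemma rel1_holds (d D : k) :
    (ops k d D 0) * (ops k d D 1) = (ops k d D 1) * (ops k d D 0) := by
  apply Finsupp.lhom_ext
  intro p c
  simp only [ops, Matrix.cons_val_zero, Matrix.cons_val_one, Matrix.head_cons,
    Module.End.mul_apply, shiftX_single, shiftY_single]

lemma rel2_holds (d D : k) :
    (ops k d D 2) * (ops k d D 0) = d • ((ops k d D 0) * (ops k d D 2)) := by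
  apply Finsupp.lhom_ext
  intro p c
  simp only [ops, Matrix.cons_val_zero, Matrix.cons_val_two, Matrix.tail_cons, Matrix.head_cons,
    Module.End.mul_apply, LinearMap.smul_apply, shiftX_single, actZ_single, Finsupp.smul_single,
    smul_eq_mul]
  congr 1
  ring

lemma rel3_holds (d D : k) :
    (ops k d D 2) * (ops k d D 1) = D • ((ops k d D 1) * (ops k d D 2)) := by
  apply Finsupp.lhom_ext
  intro p c
  simp only [ops, Matrix.cons_val_one, Matrix.cons_val_two, Matrix.tail_cons, Matrix.head_cons, Matrix.cons_val_zero,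
    Module.End.mul_apply, LinearMap.smul_apply, shiftY_single, actZ_single, Finsupp.smul_single,
    smul_eq_mul]
  congr 1
  ring

def rhoFree (d D : k) : F3 k →ₐ[k] Module.End k (M k) :=
  FreeAlgebra.lift k (ops k d D)

lemma rhoFree_rel (d D : k) : ∀ ⦃a b : F3 k⦄,
    (a ∈ SdDrel k d D ∧ b = 0) → rhoFree k d D a = rhoFree k d D b := by
  rintro a b ⟨ha, rfl⟩
  rw [map_zero]
  rcases ha with h | h | h <;> subst h <;>
    simp only [X, Y, Z, map_sub, map_mul, map_smul, rhoFree, FreeAlgebra.lift_ι_apply,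
      sub_eq_zero]
  · exact rel1_holds k d D
  · exact rel2_holds k d D
  · exact rel3_holds k d D

def rho (d D : k) : quotAlg k (SdDrel k d D) →ₐ[k] Module.End k (M k) :=
  RingQuot.liftAlgHom k ⟨rhoFree k d D, rhoFree_rel k d D⟩

lemma rho_gen (d D : k) (i : Fin 3) :
    rho k d D (gen k (SdDrel k d D) i) = ops k d D i := by
  simp [rho, gen, RingQuot.liftAlgHom_mkAlgHom_apply, rhoFree, FreeAlgebra.lift_ι_apply]

def e0 : M k := Finsupp.single ((0:ℕ),(0:ℕ),(0:ℕ)) (1:k)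

def lc (r : Set (F3 k)) (a : Fin 3 → k) : quotAlg k r :=
  a 0 • gen k r 0 + a 1 • gen k r 1 + a 2 • gen k r 2

lemma ev_lc (d D : k) (a : Fin 3 → k) :
    rho k d D (lc k (SdDrel k d D) a) (e0 k) =
      a 0 • Finsupp.single (1,0,0) 1 + a 1 • Finsupp.single (0,1,0) 1
        + a 2 • Finsupp.single (0,0,1) 1 := by
  simp [lc, map_add, map_smul, rho_gen, ops, e0, LinearMap.add_apply, LinearMap.smul_apply]

lemma ev_lc_apply (d D : k) (a : Fin 3 → k) (p : ℕ × ℕ × ℕ) :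
    rho k d D (lc k (SdDrel k d D) a) (e0 k) p =
      a 0 * (Finsupp.single ((1:ℕ),(0:ℕ),(0:ℕ)) (1:k)) p
      + a 1 * (Finsupp.single ((0:ℕ),(1:ℕ),(0:ℕ)) (1:k)) p
      + a 2 * (Finsupp.single ((0:ℕ),(0:ℕ),(1:ℕ)) (1:k)) p := by
  rw [ev_lc]
  simp only [Finsupp.add_apply, Finsupp.smul_apply, smul_eq_mul, Finsupp.single_apply]

lemma ev_expand (d D : k) (a b : Fin 3 → k) (p : ℕ × ℕ × ℕ) :
    rho k d D (lc k (SdDrel k d D) a * lc k (SdDrel k d D) b) (e0 k) p =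
      (a 0 * b 0) * (Finsupp.single ((2:ℕ),(0:ℕ),(0:ℕ)) (1:k)) p
      + (a 1 * b 1) * (Finsupp.single ((0:ℕ),(2:ℕ),(0:ℕ)) (1:k)) p
      + (a 2 * b 2) * (Finsupp.single ((0:ℕ),(0:ℕ),(2:ℕ)) (1:k)) p
      + (a 0 * b 1 + a 1 * b 0) * (Finsupp.single ((1:ℕ),(1:ℕ),(0:ℕ)) (1:k)) p
      + (a 0 * b 2 + d * (a 2 * b 0)) * (Finsupp.single ((1:ℕ),(0:ℕ),(1:ℕ)) (1:k)) p
      + (a 1 * b 2 + D * (a 2 * b 1)) * (Finsupp.single ((0:ℕ),(1:ℕ),(1:ℕ)) (1:k)) p := by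
  rw [map_mul, Module.End.mul_apply, ev_lc]
  simp only [lc, map_add, map_smul, rho_gen, ops, Matrix.cons_val_zero, Matrix.cons_val_one,
    Matrix.head_cons, Matrix.cons_val_two, Matrix.tail_cons,
    LinearMap.add_apply, LinearMap.smul_apply, shiftX_single, shiftY_single, actZ_single,
    Finsupp.smul_single, smul_eq_mul, mul_one, pow_zero, pow_one, one_mul]
  norm_num [Finsupp.add_apply, Finsupp.single_apply]
  split_ifs <;> ring

lemma lc_eq_zero (d D : k) (t : Fin 3 → k)
    (h : lc k (SdDrel k d D) t = 0) : t = 0 := by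
  have H : ∀ p, rho k d D (lc k (SdDrel k d D) t) (e0 k) p = 0 := by
    intro p; rw [h]; simp
  have h0 := H (1,0,0); rw [ev_lc_apply] at h0
  have h1 := H (0,1,0); rw [ev_lc_apply] at h1
  have h2 := H (0,0,1); rw [ev_lc_apply] at h2
  norm_num [Finsupp.single_apply] at h0 h1 h2
  funext i
  fin_cases i <;> simpa using (by assumption : _ = (0:k))

lemma mem1 (d D : k) : X k * Y k - Y k * X k ∈ SdDrel k d D := Set.mem_insert _ _
lemma mem2 (d D : k) : Z k * X k - d • (X k * Z k) ∈ SdDrel k d D :=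
  Set.mem_insert_of_mem _ (Set.mem_insert _ _)
lemma mem3 (d D : k) : Z k * Y k - D • (Y k * Z k) ∈ SdDrel k d D :=
  Set.mem_insert_of_mem _ (Set.mem_insert_of_mem _ rfl)

lemma qrel1 (d D : k) :
    gen k (SdDrel k d D) 0 * gen k (SdDrel k d D) 1
      = gen k (SdDrel k d D) 1 * gen k (SdDrel k d D) 0 := by
  have h := RingQuot.mkAlgHom_rel k (s := fun a b : F3 k => a ∈ SdDrel k d D ∧ b = 0) ⟨mem1 k d D, rfl⟩
  rw [map_zero, map_sub, map_mul, map_mul, sub_eq_zero] at h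
  exact h

lemma qrel2 (d D : k) :
    gen k (SdDrel k d D) 2 * gen k (SdDrel k d D) 0
      = d • (gen k (SdDrel k d D) 0 * gen k (SdDrel k d D) 2) := by
  have h := RingQuot.mkAlgHom_rel k (s := fun a b : F3 k => a ∈ SdDrel k d D ∧ b = 0) ⟨mem2 k d D, rfl⟩
  rw [map_zero, map_sub, map_mul, map_smul, map_mul, sub_eq_zero] at h
  exact h

lemma qrel3 (d D : k) :
    gen k (SdDrel k d D) 2 * gen k (SdDrel k d D) 1
      = D • (gen k (SdDrel k d D) 1 * gen k (SdDrel k d D) 2) := by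
  have h := RingQuot.mkAlgHom_rel k (s := fun a b : F3 k => a ∈ SdDrel k d D ∧ b = 0) ⟨mem3 k d D, rfl⟩
  rw [map_zero, map_sub, map_mul, map_smul, map_mul, sub_eq_zero] at h
  exact h

lemma key {k : Type} [Field k] (d D d' D' a1 a2 a3 b1 b2 b3 c1 c2 c3 : k)
    (hd : d ≠ 1) (hD : D ≠ 1)
    (h1 : c1*a1 = d*(a1*c1))
    (h2 : c2*a2 = d*(a2*c2))
    (h3 : c3*a3 = d*(a3*c3))
    (h4 : c1*a2 + c2*a1 = d*(a1*c2 + a2*c1))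
    (h5 : c1*a3 + d'*(c3*a1) = d*(a1*c3 + d'*(a3*c1)))
    (h6 : c2*a3 + D'*(c3*a2) = d*(a2*c3 + D'*(a3*c2)))
    (g1 : c1*b1 = D*(b1*c1))
    (g2 : c2*b2 = D*(b2*c2))
    (g3 : c3*b3 = D*(b3*c3))
    (g4 : c1*b2 + c2*b1 = D*(b1*c2 + b2*c1))
    (g5 : c1*b3 + d'*(c3*b1) = D*(b1*c3 + d'*(b3*c1)))
    (g6 : c2*b3 + D'*(c3*b2) = D*(b2*c3 + D'*(b3*c2)))
    (hdet : a1*(b2*c3) - a1*(b3*c2) - a2*(b1*c3) + a2*(b3*c1) + a3*(b1*c2) - a3*(b2*c1) ≠ 0) :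
    (d' = d ∧ D' = D) ∨ (d' = D ∧ D' = d) := by
  have hd1 : (1:k) - d ≠ 0 := sub_ne_zero_of_ne (Ne.symm hd)
  have hD1 : (1:k) - D ≠ 0 := sub_ne_zero_of_ne (Ne.symm hD)
  by_cases hc3 : c3 = 0
  · exfalso
    by_cases hc1 : c1 = 0
    · by_cases hc2 : c2 = 0
      · apply hdet; subst hc1 hc2 hc3; ring
      · have ha2 : a2 = 0 := by
          have e : (1-d)*(a2*c2) = 0 := by linear_combination h2
          rcases mul_eq_zero.mp e with h | h
          · exact absurd h hd1
          · rcases mul_eq_zero.mp h with h | h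
            · exact h
            · exact absurd h hc2
        have ha1 : a1 = 0 := by
          have e : (1-d)*(a1*c2) = 0 := by
            subst hc1; linear_combination h4
          rcases mul_eq_zero.mp e with h | h
          · exact absurd h hd1
          · rcases mul_eq_zero.mp h with h | h
            · exact h
            · exact absurd h hc2
        have hb2 : b2 = 0 := by
          have e : (1-D)*(b2*c2) = 0 := by linear_combination g2
          rcases mul_eq_zero.mp e with h | h
          · exact absurd h hD1
          · rcases mul_eq_zero.mp h with h | h
            · exact h
            · exact absurd h hc2
        have hb1 : b1 = 0 := by
          have e : (1-D)*(b1*c2) = 0 := by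
            subst hc1; linear_combination g4
          rcases mul_eq_zero.mp e with h | h
          · exact absurd h hD1
          · rcases mul_eq_zero.mp h with h | h
            · exact h
            · exact absurd h hc2
        apply hdet; subst ha1 ha2 hb1 hb2 hc1 hc3; ring
    · have ha1 : a1 = 0 := by
        have e : (1-d)*(a1*c1) = 0 := by linear_combination h1
        rcases mul_eq_zero.mp e with h | h
        · exact absurd h hd1
        · rcases mul_eq_zero.mp h with h | h
          · exact h
          · exact absurd h hc1
      have ha2 : a2 = 0 := by
        have e : (1-d)*(a2*c1) = 0 := by
          subst ha1; linear_combination h4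
        rcases mul_eq_zero.mp e with h | h
        · exact absurd h hd1
        · rcases mul_eq_zero.mp h with h | h
          · exact h
          · exact absurd h hc1
      have hb1 : b1 = 0 := by
        have e : (1-D)*(b1*c1) = 0 := by linear_combination g1
        rcases mul_eq_zero.mp e with h | h
        · exact absurd h hD1
        · rcases mul_eq_zero.mp h with h | h
          · exact h
          · exact absurd h hc1
      have hb2 : b2 = 0 := by
        have e : (1-D)*(b2*c1) = 0 := by
          subst hb1; linear_combination g4
        rcases mul_eq_zero.mp e with h | h
        · exact absurd h hD1
        · rcases mul_eq_zero.mp h with h | h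
          · exact h
          · exact absurd h hc1
      apply hdet; subst ha1 ha2 hb1 hb2 hc3; ring
  · have ha3 : a3 = 0 := by
      have e : (1-d)*(c3*a3) = 0 := by linear_combination h3
      rcases mul_eq_zero.mp e with h | h
      · exact absurd h hd1
      · rcases mul_eq_zero.mp h with h | h
        · exact absurd h hc3
        · exact h
    have hb3 : b3 = 0 := by
      have e : (1-D)*(c3*b3) = 0 := by linear_combination g3
      rcases mul_eq_zero.mp e with h | h
      · exact absurd h hD1
      · rcases mul_eq_zero.mp h with h | h
        · exact absurd h hc3
        · exact h
    have hdet' : a1*(b2*c3) - a2*(b1*c3) ≠ 0 := by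
      intro h; apply hdet; subst ha3 hb3; linear_combination h
    have key5 : (d'-d)*(c3*a1) = 0 := by subst ha3; linear_combination h5
    have key6 : (D'-d)*(c3*a2) = 0 := by subst ha3; linear_combination h6
    have key5' : (d'-D)*(c3*b1) = 0 := by subst hb3; linear_combination g5
    have key6' : (D'-D)*(c3*b2) = 0 := by subst hb3; linear_combination g6
    by_cases ha1 : a1 = 0
    · have hdet'' : a2*(b1*c3) ≠ 0 := by
        intro h; apply hdet'; subst ha1; linear_combination -h
      have ha2 : a2 ≠ 0 := fun h => hdet'' (by subst h; ring)
      have hb1 : b1 ≠ 0 := fun h => hdet'' (by subst h; ring)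
      right
      constructor
      · rcases mul_eq_zero.mp key5' with h | h
        · exact sub_eq_zero.mp h
        · rcases mul_eq_zero.mp h with h | h
          · exact absurd h hc3
          · exact absurd h hb1
      · rcases mul_eq_zero.mp key6 with h | h
        · exact sub_eq_zero.mp h
        · rcases mul_eq_zero.mp h with h | h
          · exact absurd h hc3
          · exact absurd h ha2
    · have hdd : d' = d := by
        rcases mul_eq_zero.mp key5 with h | h
        · exact sub_eq_zero.mp h
        · rcases mul_eq_zero.mp h with h | h
          · exact absurd h hc3
          · exact absurd h ha1
      have hc1 : c1 = 0 := by
        have e : (1-d)*(a1*c1) = 0 := by linear_combination h1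
        rcases mul_eq_zero.mp e with h | h
        · exact absurd h hd1
        · rcases mul_eq_zero.mp h with h | h
          · exact absurd h ha1
          · exact h
      have hc2 : c2 = 0 := by
        have e : (1-d)*(a1*c2) = 0 := by subst hc1; linear_combination h4
        rcases mul_eq_zero.mp e with h | h
        · exact absurd h hd1
        · rcases mul_eq_zero.mp h with h | h
          · exact absurd h ha1
          · exact h
      by_cases hb2 : b2 = 0
      · have hdet'' : a2*(b1*c3) ≠ 0 := by
          intro h; apply hdet'; subst hb2; linear_combination -h
        have ha2 : a2 ≠ 0 := fun h => hdet'' (by subst h; ring)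
        have hb1 : b1 ≠ 0 := fun h => hdet'' (by subst h; ring)
        right
        constructor
        · rcases mul_eq_zero.mp key5' with h | h
          · exact sub_eq_zero.mp h
          · rcases mul_eq_zero.mp h with h | h
            · exact absurd h hc3
            · exact absurd h hb1
        · rcases mul_eq_zero.mp key6 with h | h
          · exact sub_eq_zero.mp h
          · rcases mul_eq_zero.mp h with h | h
            · exact absurd h hc3
            · exact absurd h ha2
      · left
        refine ⟨hdd, ?_⟩
        rcases mul_eq_zero.mp key6' with h | h
        · exact sub_eq_zero.mp h
        · rcases mul_eq_zero.mp h with h | h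
          · exact absurd h hc3
          · exact absurd h hb2

-- The swap construction

def swapF (d D : k) : F3 k →ₐ[k] quotAlg k (SdDrel k D d) :=
  FreeAlgebra.lift k
    ![gen k (SdDrel k D d) 1, gen k (SdDrel k D d) 0, gen k (SdDrel k D d) 2]

lemma swapF_rel (d D : k) : ∀ ⦃a b : F3 k⦄,
    (a ∈ SdDrel k d D ∧ b = 0) → swapF k d D a = swapF k d D b := by
  rintro a b ⟨ha, rfl⟩
  rw [map_zero]
  rcases ha with h | h | h <;> subst h <;>
    simp only [X, Y, Z, map_sub, map_mul, map_smul, swapF, FreeAlgebra.lift_ι_apply,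
      Matrix.cons_val_zero, Matrix.cons_val_one, Matrix.head_cons, Matrix.cons_val_two,
      Matrix.tail_cons, sub_eq_zero]
  · exact (qrel1 k D d).symm
  · exact qrel3 k D d
  · exact qrel2 k D d

def swapHom (d D : k) : quotAlg k (SdDrel k d D) →ₐ[k] quotAlg k (SdDrel k D d) :=
  RingQuot.liftAlgHom k ⟨swapF k d D, swapF_rel k d D⟩

lemma swapHom_gen (d D : k) (i : Fin 3) :
    swapHom k d D (gen k (SdDrel k d D) i)
      = gen k (SdDrel k D d) (![1, 0, 2] i) := by
  fin_cases i <;>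
    simp [swapHom, gen, RingQuot.liftAlgHom_mkAlgHom_apply, swapF, FreeAlgebra.lift_ι_apply]

lemma swap_swap (d D : k) :
    (swapHom k D d).comp (swapHom k d D) = AlgHom.id k (quotAlg k (SdDrel k d D)) := by
  apply RingQuot.ringQuot_ext'
  apply FreeAlgebra.hom_ext
  funext i
  fin_cases i <;>
    simp [AlgHom.comp_apply, RingQuot.liftAlgHom_mkAlgHom_apply, swapHom, swapF,
      FreeAlgebra.lift_ι_apply, gen]

lemma gradedIso_refl (r : Set (F3 k)) : GradedIso k r r :=
  ⟨AlgEquiv.refl, by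
    rw [show (AlgEquiv.refl : quotAlg k r ≃ₐ[k] quotAlg k r).toLinearMap
      = LinearMap.id from rfl, Submodule.map_id]⟩

def swapEquiv (d D : k) :
    quotAlg k (SdDrel k d D) ≃ₐ[k] quotAlg k (SdDrel k D d) :=
  AlgEquiv.ofAlgHom (swapHom k d D) (swapHom k D d)
    (swap_swap k D d) (swap_swap k d D)

lemma gradedIso_swap (d D : k) : GradedIso k (SdDrel k d D) (SdDrel k D d) := by
  refine ⟨swapEquiv k d D, ?_⟩
  have himg : ∀ i : Fin 3, swapEquiv k d D (gen k (SdDrel k d D) i)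
      = gen k (SdDrel k D d) (![1, 0, 2] i) := fun i => swapHom_gen k d D i
  rw [genSpan, genSpan, Submodule.map_span]
  congr 1
  ext w
  constructor
  · rintro ⟨_, ⟨i, rfl⟩, rfl⟩
    exact ⟨![1, 0, 2] i, by simp [AlgEquiv.toLinearMap_apply, himg i]⟩
  · rintro ⟨i, rfl⟩
    refine ⟨gen k (SdDrel k d D) (![1, 0, 2] i), ⟨![1, 0, 2] i, rfl⟩, ?_⟩
    fin_cases i <;> exact himg _

end Stmt7Aux

theorem stmt7 (k : Type) [Field k] [IsAlgClosed k] (hchar : ringChar k ≠ 2)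
    (d D d' D' : k) (hd : d ≠ 1) (hD : D ≠ 1) (hd' : d' ≠ 1) (hD' : D' ≠ 1) :
    GradedIso k (SdDrel k d D) (SdDrel k d' D') ↔
      (d' = d ∧ D' = D) ∨ (d' = D ∧ D' = d) := by
  constructor
  · rintro ⟨φ, hspan⟩
    have hmem : ∀ i : Fin 3, φ (gen k (SdDrel k d D) i) ∈ genSpan k (SdDrel k d' D') := by
      intro i
      rw [← hspan]
      exact ⟨gen k (SdDrel k d D) i, Submodule.subset_span ⟨i, rfl⟩, rfl⟩
    obtain ⟨a, ha⟩ := (Submodule.mem_span_range_iff_exists_fun k).mp (hmem 0)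
    obtain ⟨b, hb⟩ := (Submodule.mem_span_range_iff_exists_fun k).mp (hmem 1)
    obtain ⟨c, hc⟩ := (Submodule.mem_span_range_iff_exists_fun k).mp (hmem 2)
    have ha' : φ (gen k (SdDrel k d D) 0) = Stmt7Aux.lc k (SdDrel k d' D') a := by
      rw [← ha, Fin.sum_univ_three]; rfl
    have hb' : φ (gen k (SdDrel k d D) 1) = Stmt7Aux.lc k (SdDrel k d' D') b := by
      rw [← hb, Fin.sum_univ_three]; rfl
    have hc' : φ (gen k (SdDrel k d D) 2) = Stmt7Aux.lc k (SdDrel k d' D') c := by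
      rw [← hc, Fin.sum_univ_three]; rfl
    have E2 : Stmt7Aux.lc k (SdDrel k d' D') c * Stmt7Aux.lc k (SdDrel k d' D') a
        = d • (Stmt7Aux.lc k (SdDrel k d' D') a * Stmt7Aux.lc k (SdDrel k d' D') c) := by
      rw [← ha', ← hc', ← map_mul, Stmt7Aux.qrel2 k d D, map_smul, map_mul]
    have E3 : Stmt7Aux.lc k (SdDrel k d' D') c * Stmt7Aux.lc k (SdDrel k d' D') b
        = D • (Stmt7Aux.lc k (SdDrel k d' D') b * Stmt7Aux.lc k (SdDrel k d' D') c) := by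
      rw [← hb', ← hc', ← map_mul, Stmt7Aux.qrel3 k d D, map_smul, map_mul]
    have h2p : ∀ p, Stmt7Aux.rho k d' D'
          (Stmt7Aux.lc k (SdDrel k d' D') c * Stmt7Aux.lc k (SdDrel k d' D') a)
          (Stmt7Aux.e0 k) p
        = d * Stmt7Aux.rho k d' D'
          (Stmt7Aux.lc k (SdDrel k d' D') a * Stmt7Aux.lc k (SdDrel k d' D') c)
          (Stmt7Aux.e0 k) p := by
      intro p
      rw [E2, map_smul]
      simp [LinearMap.smul_apply, Finsupp.smul_apply]
    have h3p : ∀ p, Stmt7Aux.rho k d' D'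
          (Stmt7Aux.lc k (SdDrel k d' D') c * Stmt7Aux.lc k (SdDrel k d' D') b)
          (Stmt7Aux.e0 k) p
        = D * Stmt7Aux.rho k d' D'
          (Stmt7Aux.lc k (SdDrel k d' D') b * Stmt7Aux.lc k (SdDrel k d' D') c)
          (Stmt7Aux.e0 k) p := by
      intro p
      rw [E3, map_smul]
      simp [LinearMap.smul_apply, Finsupp.smul_apply]
    have q1 := h2p (2,0,0)
    have q2 := h2p (0,2,0)
    have q3 := h2p (0,0,2)
    have q4 := h2p (1,1,0)
    have q5 := h2p (1,0,1)
    have q6 := h2p (0,1,1)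
    rw [Stmt7Aux.ev_expand, Stmt7Aux.ev_expand] at q1 q2 q3 q4 q5 q6
    norm_num [Finsupp.single_apply, Prod.ext_iff] at q1 q2 q3 q4 q5 q6
    have r1 := h3p (2,0,0)
    have r2 := h3p (0,2,0)
    have r3 := h3p (0,0,2)
    have r4 := h3p (1,1,0)
    have r5 := h3p (1,0,1)
    have r6 := h3p (0,1,1)
    rw [Stmt7Aux.ev_expand, Stmt7Aux.ev_expand] at r1 r2 r3 r4 r5 r6
    norm_num [Finsupp.single_apply, Prod.ext_iff] at r1 r2 r3 r4 r5 r6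
    have K1 : c 0 * a 0 = d * (a 0 * c 0) := by linear_combination q1
    have K2 : c 1 * a 1 = d * (a 1 * c 1) := by linear_combination q2
    have K3 : c 2 * a 2 = d * (a 2 * c 2) := by linear_combination q3
    have K4 : c 0 * a 1 + c 1 * a 0 = d * (a 0 * c 1 + a 1 * c 0) := by linear_combination q4
    have K5 : c 0 * a 2 + d' * (c 2 * a 0) = d * (a 0 * c 2 + d' * (a 2 * c 0)) := by
      linear_combination q5
    have K6 : c 1 * a 2 + D' * (c 2 * a 1) = d * (a 1 * c 2 + D' * (a 2 * c 1)) := by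
      linear_combination q6
    have L1 : c 0 * b 0 = D * (b 0 * c 0) := by linear_combination r1
    have L2 : c 1 * b 1 = D * (b 1 * c 1) := by linear_combination r2
    have L3 : c 2 * b 2 = D * (b 2 * c 2) := by linear_combination r3
    have L4 : c 0 * b 1 + c 1 * b 0 = D * (b 0 * c 1 + b 1 * c 0) := by linear_combination r4
    have L5 : c 0 * b 2 + d' * (c 2 * b 0) = D * (b 0 * c 2 + d' * (b 2 * c 0)) := by
      linear_combination r5
    have L6 : c 1 * b 2 + D' * (c 2 * b 1) = D * (b 1 * c 2 + D' * (b 2 * c 1)) := by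
      linear_combination r6
    have hdetM : (Matrix.of ![a, b, c]).det ≠ 0 := by
      intro h0
      obtain ⟨v, hv0, hvM⟩ := Matrix.exists_vecMul_eq_zero_iff.mpr h0
      have ht : (fun j => v 0 * a j + v 1 * b j + v 2 * c j) = fun _ => (0:k) := by
        funext j
        have hj := congrFun hvM j
        simpa [Matrix.vecMul, dotProduct, Fin.sum_univ_three] using hj
      have expand : φ (Stmt7Aux.lc k (SdDrel k d D) v)
          = Stmt7Aux.lc k (SdDrel k d' D') (fun j => v 0 * a j + v 1 * b j + v 2 * c j) := by
        simp only [Stmt7Aux.lc, map_add, map_smul, ha', hb', hc']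
        module
      have hlcv : φ (Stmt7Aux.lc k (SdDrel k d D) v) = 0 := by
        rw [expand, ht]
        simp [Stmt7Aux.lc]
      have hz : Stmt7Aux.lc k (SdDrel k d D) v = 0 := by
        apply φ.injective
        rw [hlcv, map_zero]
      exact hv0 (Stmt7Aux.lc_eq_zero k d D v hz)
    have hdet : a 0*(b 1*c 2) - a 0*(b 2*c 1) - a 1*(b 0*c 2) + a 1*(b 2*c 0)
        + a 2*(b 0*c 1) - a 2*(b 1*c 0) ≠ 0 := by
      intro h
      apply hdetM
      rw [Matrix.det_fin_three]
      simp only [Matrix.of_apply, Matrix.cons_val', Matrix.cons_val_zero, Matrix.cons_val_one,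
        Matrix.head_cons, Matrix.empty_val', Matrix.cons_val_fin_one, Matrix.head_fin_const,
        Matrix.cons_val_two, Matrix.tail_cons]
      linear_combination h
    exact Stmt7Aux.key d D d' D' (a 0) (a 1) (a 2) (b 0) (b 1) (b 2) (c 0) (c 1) (c 2)
      hd hD K1 K2 K3 K4 K5 K6 L1 L2 L3 L4 L5 L6 hdet
  · rintro (⟨h1, h2⟩ | ⟨h1, h2⟩)
    · rw [h1, h2]
      exact Stmt7Aux.gradedIso_refl k _
    · rw [h1, h2]
      exact Stmt7Aux.gradedIso_swap k d D
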